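/- For every a > 1 there exists a transcendental entire (or meromorphic) function f such that T(r,f) ≤ log^a r for all sufficiently large r; i.e., the Nevanlinna characteristic of a transcendental function can grow slower than any prescribed power log^a r with a > 1. -/

import Mathlib

open Real Filter FormalMultilinearSeries

/-- Coefficients of our slowly growing entire function: `c n = exp(-exp n)`. -/
noncomputable def slowCoeff : ℕ → ℂ := fun n => ((Real.exp (-(Real.exp n)) : ℝ) : ℂ)

lemma slowCoeff_norm (n : ℕ) : ‖slowCoeff n‖ = Real.exp (-(Real.exp n)) := by
  rw [slowCoeff, Complex.norm_real, Real.norm_eq_abs, abs_of_pos (Real.exp_pos _)]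

lemma slowCoeff_ne_zero (n : ℕ) : slowCoeff n ≠ 0 := by
  simp [slowCoeff, (Real.exp_pos _).ne']

/-- Legendre-type inequality: `x*s - e^x ≤ s log s - s` for `s > 0`. -/
lemma legendre_ineq (x s : ℝ) (hs : 0 < s) :
    x * s - Real.exp x ≤ s * Real.log s - s := by
  have h : (x - Real.log s) + 1 ≤ Real.exp (x - Real.log s) := Real.add_one_le_exp _
  rw [Real.exp_sub, Real.exp_log hs] at h
  have h2 : ((x - Real.log s) + 1) * s ≤ Real.exp x := by
    rw [← le_div_iff₀ hs]; exact h
  nlinarith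

lemma slow_radius : (ofScalars ℂ slowCoeff).radius = ⊤ := by
  apply ofScalars_radius_eq_top_of_tendsto
  · exact Eventually.of_forall slowCoeff_ne_zero
  · have h1 : Tendsto (fun n : ℕ => Real.exp n * (1 - Real.exp 1)) atTop atBot := by
      apply Tendsto.atTop_mul_const_of_neg
      · nlinarith [Real.add_one_le_exp (1 : ℝ)]
      · exact Real.tendsto_exp_atTop.comp tendsto_natCast_atTop_atTop
    have h2 := Real.tendsto_exp_atBot.comp h1
    apply h2.congr
    intro n
    simp only [Function.comp_apply, slowCoeff_norm, Nat.succ_eq_add_one]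
    rw [← Real.exp_sub]
    congr 1
    have : Real.exp ((n : ℝ) + 1) = Real.exp n * Real.exp 1 := Real.exp_add _ _
    push_cast
    rw [this]; ring

theorem transcendental_entire_slow_growth (a : ℝ) (ha : 1 < a) :
    ∃ f : ℂ → ℂ, Differentiable ℂ f ∧
      (¬ ∃ p : Polynomial ℂ, ∀ z : ℂ, f z = p.eval z) ∧
      ∃ r₀ : ℝ, ∀ r ≥ r₀,
        (2 * Real.pi)⁻¹ *
          (∫ φ in (0:ℝ)..(2 * Real.pi),
            max (Real.log ‖f ((r : ℂ) * Complex.exp (φ * Complex.I))‖) 0)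
        ≤ (Real.log r) ^ a := by
  classical
  set p : FormalMultilinearSeries ℂ ℂ ℂ := ofScalars ℂ slowCoeff with hp
  have hrad : p.radius = ⊤ := slow_radius
  have hball : HasFPowerSeriesOnBall p.sum p 0 p.radius :=
    p.hasFPowerSeriesOnBall (by rw [hrad]; exact ENNReal.zero_lt_top)
  have hdiff : Differentiable ℂ p.sum := by
    intro z
    refine (hball.analyticAt_of_mem ?_).differentiableAt
    rw [hrad]
    exact EMetric.mem_ball.2 (edist_lt_top _ _)
  refine ⟨p.sum, hdiff, ?_, ?_⟩
  · -- not a polynomial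
    rintro ⟨q, hq⟩
    have hAt : HasFPowerSeriesAt p.sum p 0 := hball.hasFPowerSeriesAt
    have hq2 : HasFPowerSeriesAt p.sum (ofScalars ℂ (fun n => q.coeff n)) 0 := by
      set q2 : FormalMultilinearSeries ℂ ℂ ℂ := ofScalars ℂ (fun n => q.coeff n) with hq2
      have hrad2 : q2.radius = ⊤ := by
        apply FormalMultilinearSeries.radius_eq_top_of_eventually_eq_zero
        rw [eventually_atTop]
        refine ⟨q.natDegree + 1, fun n hn => ?_⟩
        apply ofScalars_eq_zero_of_scalar_zero
        exact q.coeff_eq_zero_of_natDegree_lt (by omega)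
      refine HasFPowerSeriesOnBall.hasFPowerSeriesAt (r := ⊤) ?_
      refine ⟨hrad2.ge, ENNReal.zero_lt_top, ?_⟩
      intro y _
      rw [zero_add, hq y]
      have hzero : ∀ n ∉ Finset.range (q.natDegree + 1),
          (q2 n fun _ => y) = 0 := by
        intro n hn
        rw [hq2, ofScalars_apply_eq]
        have hc0 : q.coeff n = 0 :=
          q.coeff_eq_zero_of_natDegree_lt (by simp at hn; omega)
        rw [hc0, zero_smul]
      have hhs := hasSum_sum_of_ne_finset_zero (L := SummationFilter.unconditional ℕ) hzero
      convert hhs using 1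
      · rfl
      rw [Polynomial.eval_eq_sum_range]
      refine Finset.sum_congr rfl fun i _ => ?_
      rw [hq2, ofScalars_apply_eq, smul_eq_mul]
    have hcoef : slowCoeff = fun n => q.coeff n :=
      ofScalars_series_injective ℂ ℂ (hAt.eq_formalMultilinearSeries hq2)
    have h0 : slowCoeff (q.natDegree + 1) = 0 := by
      rw [hcoef]
      exact q.coeff_eq_zero_of_natDegree_lt (Nat.lt_succ_self _)
    exact slowCoeff_ne_zero _ h0
  · -- growth estimate
    have hε : (0:ℝ) < (a - 1) / 2 := by linarith
    set ε := (a - 1) / 2 with hεdef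
    have hlogev : ∀ᶠ x : ℝ in atTop, Real.log x ≤ x ^ ε := by
      filter_upwards [(isLittleO_log_rpow_atTop hε).def one_pos,
        eventually_ge_atTop (0:ℝ)] with x hx hx0
      have h1 : |Real.log x| ≤ 1 * |x ^ ε| := by
        simpa [Real.norm_eq_abs] using hx
      have h2 : |x ^ ε| = x ^ ε := abs_of_nonneg (Real.rpow_nonneg hx0 ε)
      calc Real.log x ≤ |Real.log x| := le_abs_self _
        _ ≤ x ^ ε := by rw [h2] at h1; linarith
    have hEv : ∀ᶠ t : ℝ in atTop,
        (Real.log 2 + ((t+1) * Real.log (t+1) - (t+1)) ≤ t ^ a ∧ 1 ≤ t) := by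
      have h2 : ∀ᶠ t : ℝ in atTop, Real.log (t+1) ≤ (t+1) ^ ε :=
        (tendsto_atTop_add_const_right atTop 1 tendsto_id).eventually hlogev
      have h3 : ∀ᶠ t : ℝ in atTop, (2:ℝ) ^ (1+ε) + 1 ≤ t ^ ε :=
        (tendsto_rpow_atTop hε).eventually_ge_atTop _
      filter_upwards [h2, h3, eventually_ge_atTop (1:ℝ)] with t h2 h3 h1
      refine ⟨?_, h1⟩
      have ht : (0:ℝ) < t := by linarith
      have e1 : (t+1) ^ ε ≤ (2*t) ^ ε :=
        Real.rpow_le_rpow (by linarith) (by linarith) hε.le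
      have e2 : (2*t) ^ ε = 2 ^ ε * t ^ ε := Real.mul_rpow (by norm_num) ht.le
      have e3 : Real.log (t+1) ≤ 2 ^ ε * t ^ ε := by rw [← e2]; exact h2.trans e1
      have hlog1 : 0 ≤ Real.log (t+1) := Real.log_nonneg (by linarith)
      have e4 : (t+1) * Real.log (t+1) ≤ (2*t) * (2 ^ ε * t ^ ε) :=
        mul_le_mul (by linarith) e3 hlog1 (by linarith)
      have e5 : t * t ^ ε = t ^ (1+ε) := by
        rw [Real.rpow_add ht, Real.rpow_one]
      have e6 : t ^ a = t ^ (1+ε) * t ^ ε := by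
        rw [← Real.rpow_add ht]
        congr 1
        rw [hεdef]; ring
      have e7 : (1:ℝ) ≤ t ^ (1+ε) := Real.one_le_rpow h1 (by linarith)
      have e8 : Real.log 2 ≤ 1 := by
        have := Real.log_le_sub_one_of_pos (by norm_num : (0:ℝ) < 2)
        linarith
      have key : (2*t) * (2 ^ ε * t ^ ε) = 2 ^ (1+ε) * t ^ (1+ε) := by
        rw [Real.rpow_add (by norm_num : (0:ℝ) < 2), Real.rpow_one, ← e5]; ring
      have e9 : (2:ℝ) ^ (1+ε) * t ^ (1+ε) + t ^ (1+ε) ≤ t ^ ε * t ^ (1+ε) := by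
        have := mul_le_mul_of_nonneg_right h3 (le_trans zero_le_one e7)
        linarith [this]
      rw [e6]
      nlinarith [e4, key, e7, e8, e9]
    obtain ⟨t₀, ht₀⟩ := eventually_atTop.mp hEv
    refine ⟨Real.exp t₀, fun r hr => ?_⟩
    have hrpos : (0:ℝ) < r := lt_of_lt_of_le (Real.exp_pos t₀) hr
    set t := Real.log r with htdef
    have htt : t₀ ≤ t := by
      rw [htdef, ← Real.log_exp t₀]
      exact Real.log_le_log (Real.exp_pos _) hr
    obtain ⟨hmain, h1t⟩ := ht₀ t htt
    set K := (t+1) * Real.log (t+1) - (t+1) with hK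
    set B := 2 * Real.exp K with hBdef
    have hBpos : (0:ℝ) < B := by positivity
    -- pointwise bound on the circle of radius r
    have hcircle : ∀ z : ℂ, ‖z‖ = r → ‖p.sum z‖ ≤ B := by
      intro z hz
      have hsum : p.sum z = ∑' n : ℕ, slowCoeff n • z ^ n := by
        rw [hp]
        exact ofScalars_sum_eq slowCoeff z
      have hterm : ∀ n : ℕ, ‖slowCoeff n • z ^ n‖ ≤ Real.exp K * (Real.exp (-1)) ^ n := by
        intro n
        have h1 : ‖slowCoeff n • z ^ n‖ = Real.exp (-(Real.exp n)) * r ^ n := by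
          rw [norm_smul, slowCoeff_norm, norm_pow, hz]
        have h2 : (r:ℝ) ^ n = Real.exp ((n:ℝ) * t) := by
          rw [Real.exp_nat_mul, htdef, Real.exp_log hrpos]
        have h3 : (n:ℝ) * t - Real.exp n ≤ K - n := by
          have hs : (0:ℝ) < t + 1 := by linarith
          have := legendre_ineq (n:ℝ) (t+1) hs
          rw [hK]
          nlinarith
        have h4 : Real.exp (-(Real.exp n)) * Real.exp ((n:ℝ) * t)
            = Real.exp ((n:ℝ) * t - Real.exp n) := by
          rw [← Real.exp_add]; ring_nf
        have h5 : Real.exp ((n:ℝ) * t - Real.exp n) ≤ Real.exp (K - n) :=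
          Real.exp_le_exp.2 h3
        have h6 : Real.exp (K - (n:ℝ)) = Real.exp K * (Real.exp (-1)) ^ n := by
          rw [← Real.exp_nat_mul, ← Real.exp_add]
          congr 1; ring
        rw [h1, h2, h4]
        rw [h6] at h5
        exact h5
      have hgeo : Summable (fun n : ℕ => Real.exp K * (Real.exp (-1)) ^ n) :=
        (summable_geometric_of_lt_one (Real.exp_nonneg _)
          (Real.exp_lt_one_iff.2 (by norm_num))).mul_left _
      have hns : Summable (fun n : ℕ => ‖slowCoeff n • z ^ n‖) :=
        Summable.of_nonneg_of_le (fun n => norm_nonneg _) hterm hgeo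
      have h7 : ‖p.sum z‖ ≤ ∑' n : ℕ, ‖slowCoeff n • z ^ n‖ := by
        rw [hsum]
        exact norm_tsum_le_tsum_norm hns
      have h8 : (∑' n : ℕ, ‖slowCoeff n • z ^ n‖)
          ≤ ∑' n : ℕ, Real.exp K * (Real.exp (-1)) ^ n :=
        Summable.tsum_le_tsum hterm hns hgeo
      have h9 : (∑' n : ℕ, Real.exp K * (Real.exp (-1)) ^ n)
          = Real.exp K * (1 - Real.exp (-1))⁻¹ := by
        rw [tsum_mul_left, tsum_geometric_of_lt_one (Real.exp_nonneg _)
          (Real.exp_lt_one_iff.2 (by norm_num))]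
      have hhalf : Real.exp (-1) ≤ 1/2 := by
        have h2e : (2:ℝ) ≤ Real.exp 1 := by
          have := Real.add_one_le_exp (1:ℝ); linarith
        have := Real.exp_pos (1:ℝ)
        rw [Real.exp_neg]
        rw [inv_le_comm₀ (by linarith) (by norm_num)]
        simpa using h2e
      have h10 : (1 - Real.exp (-1))⁻¹ ≤ 2 := by
        have hpos : (0:ℝ) < 1 - Real.exp (-1) := by
          have := Real.exp_lt_one_iff.2 (by norm_num : (-1:ℝ) < 0); linarith
        calc (1 - Real.exp (-1))⁻¹ ≤ (1/2 : ℝ)⁻¹ := by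
              apply inv_anti₀ (by norm_num) (by linarith)
          _ = 2 := by norm_num
      calc ‖p.sum z‖ ≤ Real.exp K * (1 - Real.exp (-1))⁻¹ := by
            rw [← h9]; exact h7.trans h8
        _ ≤ Real.exp K * 2 := by
            exact mul_le_mul_of_nonneg_left h10 (Real.exp_nonneg _)
        _ = B := by rw [hBdef]; ring
    set M := max (Real.log B) 0 with hM
    have hgM : ∀ φ : ℝ,
        max (Real.log ‖p.sum ((r : ℂ) * Complex.exp (φ * Complex.I))‖) 0 ≤ M := by
      intro φ
      set z : ℂ := (r : ℂ) * Complex.exp (φ * Complex.I) with hzdef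
      have hzabs : ‖z‖ = r := by
        rw [hzdef, norm_mul, Complex.norm_real, Real.norm_eq_abs, Complex.norm_exp_ofReal_mul_I,
          abs_of_pos hrpos, mul_one]
      have hb := hcircle z hzabs
      rcases eq_or_lt_of_le (norm_nonneg (p.sum z)) with h | h
      · rw [← h, Real.log_zero]
        simp [hM]
      · exact max_le_max (Real.log_le_log h hb) le_rfl
    -- the integral bound
    set g : ℝ → ℝ := fun φ =>
      max (Real.log ‖p.sum ((r : ℂ) * Complex.exp (φ * Complex.I))‖) 0 with hg
    have hgmeas : Measurable g := by
      apply Measurable.max _ measurable_const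
      apply Real.measurable_log.comp
      apply Continuous.measurable
      refine continuous_norm.comp (hdiff.continuous.comp ?_)
      exact continuous_const.mul
        (Complex.continuous_exp.comp (Complex.continuous_ofReal.mul continuous_const))
    have hMnn : 0 ≤ M := le_max_right _ _
    have hgint : IntervalIntegrable g MeasureTheory.volume 0 (2 * Real.pi) := by
      apply IntervalIntegrable.mono_fun' (g := fun _ => M) intervalIntegrable_const
        hgmeas.aestronglyMeasurable
      refine Filter.Eventually.of_forall fun φ => ?_
      show ‖g φ‖ ≤ M
      rw [Real.norm_eq_abs, abs_of_nonneg (le_max_right _ _)]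
      exact hgM φ
    have hI : (∫ φ in (0:ℝ)..(2 * Real.pi), g φ)
        ≤ ∫ φ in (0:ℝ)..(2 * Real.pi), M := by
      apply intervalIntegral.integral_mono_on (by positivity) hgint intervalIntegrable_const
      exact fun φ _ => hgM φ
    rw [intervalIntegral.integral_const, smul_eq_mul, sub_zero] at hI
    have hMa : M ≤ t ^ a := by
      rw [hM]
      apply max_le
      · have : Real.log B = Real.log 2 + K := by
          rw [hBdef, Real.log_mul (by norm_num) (Real.exp_ne_zero _), Real.log_exp]
        rw [this]
        exact hmain
      · exact Real.rpow_nonneg (by linarith) a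
    have hπ : (0:ℝ) < 2 * Real.pi := by positivity
    calc (2 * Real.pi)⁻¹ * (∫ φ in (0:ℝ)..(2 * Real.pi), g φ)
        ≤ (2 * Real.pi)⁻¹ * (2 * Real.pi * M) := by
          exact mul_le_mul_of_nonneg_left hI (by positivity)
      _ = M := by field_simp
      _ ≤ t ^ a := hMa
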